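/- Let a > 0, let k ≥ 1, let σ_1, …, σ_k be positive real numbers, and let w_1, …, w_k be nonnegative real numbers with w_1 + ⋯ + w_k = 1. If a·σ_j < π/2 for every j = 1, …, k, then every complex number λ satisfying the characteristic equation λ + a·∑_{j=1}^k w_j·exp(−σ_j·λ) = 0 has strictly negative real part. -/

import Mathlib

open Real Complex

theorem stmt_0 (a : ℝ) (ha : 0 < a) (k : ℕ) (hk : 1 ≤ k)
    (σ w : Fin k → ℝ) (hσ : ∀ j, 0 < σ j) (hw : ∀ j, 0 ≤ w j)
    (hwsum : ∑ j, w j = 1) (hstab : ∀ j, a * σ j < Real.pi / 2)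
    (lam : ℂ)
    (hroot : lam + (a : ℂ) * ∑ j, (w j : ℂ) * Complex.exp (-(σ j : ℂ) * lam) = 0) :
    lam.re < 0 := by
  by_contra h
  push_neg at h
  set x := lam.re with hx
  set y := lam.im with hy
  -- bound the modulus of lam by a
  have habsS : ‖(∑ j, (w j : ℂ) * Complex.exp (-(σ j : ℂ) * lam))‖ ≤ 1 := by
    calc ‖(∑ j, (w j : ℂ) * Complex.exp (-(σ j : ℂ) * lam))‖
        ≤ ∑ j, ‖((w j : ℂ) * Complex.exp (-(σ j : ℂ) * lam))‖ := by
          exact norm_sum_le _ _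
      _ ≤ ∑ j, w j := by
          apply Finset.sum_le_sum
          intro j _
          rw [norm_mul, Complex.norm_exp]
          have hre : ((-(σ j : ℂ)) * lam).re = -(σ j) * x := by
            simp [Complex.mul_re, hx]
          rw [hre]
          have h1 : Real.exp (-(σ j) * x) ≤ 1 := by
            apply Real.exp_le_one_iff.mpr
            nlinarith [hσ j]
          have h2 : ‖((w j : ℂ))‖ = w j := by
            rw [Complex.norm_real, Real.norm_eq_abs, _root_.abs_of_nonneg (hw j)]
          nlinarith [hw j, Real.exp_pos (-(σ j) * x), norm_nonneg ((w j : ℂ))]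
      _ = 1 := hwsum
  have hlam : lam = -((a : ℂ) * ∑ j, (w j : ℂ) * Complex.exp (-(σ j : ℂ) * lam)) := by
    linear_combination hroot
  have habs : ‖lam‖ ≤ a := by
    rw [hlam]
    rw [norm_neg, norm_mul, Complex.norm_real, Real.norm_eq_abs, abs_of_pos ha]
    nlinarith
  have him : |y| ≤ a := le_trans (Complex.abs_im_le_norm lam) habs
  -- cos (σ j * y) > 0 for each j
  have hcos : ∀ j, 0 < Real.cos (σ j * y) := by
    intro j
    apply Real.cos_pos_of_mem_Ioo
    constructor
    · have : |σ j * y| < Real.pi / 2 := by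
        rw [abs_mul, abs_of_pos (hσ j)]
        calc σ j * |y| ≤ σ j * a := by nlinarith [hσ j]
          _ = a * σ j := by ring
          _ < Real.pi / 2 := hstab j
      linarith [neg_abs_le (σ j * y)]
    · have : |σ j * y| < Real.pi / 2 := by
        rw [abs_mul, abs_of_pos (hσ j)]
        calc σ j * |y| ≤ σ j * a := by nlinarith [hσ j]
          _ = a * σ j := by ring
          _ < Real.pi / 2 := hstab j
      linarith [le_abs_self (σ j * y)]
  -- real part of the equation
  have hre : x + a * ∑ j, w j * (Real.exp (-(σ j) * x) * Real.cos (σ j * y)) = 0 := by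
    have hterm : ∀ j : Fin k, ((w j : ℂ) * Complex.exp (-(σ j : ℂ) * lam)).re
        = w j * (Real.exp (-(σ j) * x) * Real.cos (σ j * y)) := by
      intro j
      have h1 : ((-(σ j : ℂ)) * lam).re = -(σ j) * x := by simp [Complex.mul_re, hx]
      have h2 : ((-(σ j : ℂ)) * lam).im = -(σ j) * y := by simp [Complex.mul_im, hy]
      rw [Complex.mul_re, Complex.exp_re, h1, h2]
      simp only [Complex.ofReal_re, Complex.ofReal_im, zero_mul, sub_zero, neg_mul,
        Real.cos_neg]
    have h2 : ((a : ℂ) * ∑ j, (w j : ℂ) * Complex.exp (-(σ j : ℂ) * lam)).re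
        = a * ∑ j, w j * (Real.exp (-(σ j) * x) * Real.cos (σ j * y)) := by
      rw [Complex.re_ofReal_mul, Complex.re_sum]
      congr 1
      exact Finset.sum_congr rfl (fun j _ => hterm j)
    have := congrArg Complex.re hroot
    rw [Complex.add_re, h2, Complex.zero_re] at this
    exact this
  -- the sum is strictly positive
  have hpos : 0 < ∑ j, w j * (Real.exp (-(σ j) * x) * Real.cos (σ j * y)) := by
    obtain ⟨j₀, hj₀⟩ : ∃ j : Fin k, 0 < w j := by
      by_contra hc
      push_neg at hc
      have : ∑ j, w j ≤ 0 := Finset.sum_nonpos (fun j _ => hc j)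
      rw [hwsum] at this; linarith
    apply Finset.sum_pos'
    · intro j _
      exact mul_nonneg (hw j) (le_of_lt (mul_pos (Real.exp_pos _) (hcos j)))
    · exact ⟨j₀, Finset.mem_univ j₀, mul_pos hj₀ (mul_pos (Real.exp_pos _) (hcos j₀))⟩
  nlinarith [mul_pos ha hpos]
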